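/- arXiv:1210.3962 — 8 statements merged into one kernel-verified Lean document; each statement's English description precedes it below -/
import Mathlib

section
/- Let σ̄ ∈ S⁺_α and set x̄ = G_α(σ̄)⁻¹ c. If every component of x̄ equals 1 or −1 (i.e., x̄ ∈ {−1,1}ⁿ), then x̄ is a global minimizer of the primal problem: for every x ∈ {−1,1}ⁿ, P(x̄) ≤ P(x). -/
open Matrix

lemma diag_quad {n : ℕ} (d y : Fin n → ℝ) (hy : ∀ i, y i = 1 ∨ y i = -1) :
    y ⬝ᵥ (Matrix.diagonal d) *ᵥ y = ∑ i, d i := by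
  simp only [dotProduct, Matrix.mulVec_diagonal]
  apply Finset.sum_congr rfl
  intro i _
  rcases hy i with h | h <;> rw [h] <;> ring

/-- If `σ̄ ∈ S⁺_α` and `x̄ = G_α(σ̄)⁻¹ c` has all components `±1`,
then `x̄` is a global minimizer of `P(x) = (1/2)⟨x, Qx⟩ - ⟨x, c⟩` over `{-1,1}ⁿ`. -/
theorem stmt_0 (n : ℕ) (hn : 0 < n)
    (Q : Matrix (Fin n) (Fin n) ℝ) (hQ : Q.IsSymm)
    (c α σbar : Fin n → ℝ)
    (hσ : (Q + Matrix.diagonal (α + σbar)).PosDef)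
    (xbar : Fin n → ℝ)
    (hxbar : xbar = (Q + Matrix.diagonal (α + σbar))⁻¹ *ᵥ c)
    (hfeas : ∀ i, xbar i = 1 ∨ xbar i = -1) :
    ∀ x : Fin n → ℝ, (∀ i, x i = 1 ∨ x i = -1) →
      (1/2) * (xbar ⬝ᵥ Q *ᵥ xbar) - xbar ⬝ᵥ c ≤ (1/2) * (x ⬝ᵥ Q *ᵥ x) - x ⬝ᵥ c := by
  intro x hx
  set d : Fin n → ℝ := α + σbar with hd
  set G : Matrix (Fin n) (Fin n) ℝ := Q + Matrix.diagonal d with hG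
  have hGsym : Gᵀ = G := by
    rw [hG, Matrix.transpose_add, Matrix.diagonal_transpose, hQ]
  -- G xbar = c
  have hunit : IsUnit G.det := isUnit_iff_ne_zero.2 (ne_of_gt hσ.det_pos)
  have hc : G *ᵥ xbar = c := by
    rw [hxbar, Matrix.mulVec_mulVec, Matrix.mul_nonsing_inv _ hunit, Matrix.one_mulVec]
  -- symmetry of the bilinear form
  have hsymdot : ∀ u v : Fin n → ℝ, u ⬝ᵥ G *ᵥ v = v ⬝ᵥ G *ᵥ u := by
    intro u v
    rw [Matrix.dotProduct_mulVec, ← Matrix.mulVec_transpose, hGsym, dotProduct_comm]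
  -- nonnegativity
  have hpsd : 0 ≤ (x - xbar) ⬝ᵥ G *ᵥ (x - xbar) := by
    have := hσ.posSemidef.dotProduct_mulVec_nonneg (x - xbar)
    simpa using this
  -- expand
  have hexp : (x - xbar) ⬝ᵥ G *ᵥ (x - xbar)
      = x ⬝ᵥ G *ᵥ x - 2 * (x ⬝ᵥ c) + xbar ⬝ᵥ c := by
    rw [Matrix.mulVec_sub, dotProduct_sub, sub_dotProduct, sub_dotProduct]
    have h1 : xbar ⬝ᵥ G *ᵥ x = x ⬝ᵥ c := by rw [hsymdot, hc]
    have h2 : x ⬝ᵥ G *ᵥ xbar = x ⬝ᵥ c := by rw [hc]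
    have h3 : xbar ⬝ᵥ G *ᵥ xbar = xbar ⬝ᵥ c := by rw [hc]
    rw [h1, h2, h3]; ring
  have hqx : x ⬝ᵥ G *ᵥ x = x ⬝ᵥ Q *ᵥ x + ∑ i, d i := by
    rw [hG, Matrix.add_mulVec, dotProduct_add, diag_quad d x hx]
  have hqxbar : xbar ⬝ᵥ G *ᵥ xbar = xbar ⬝ᵥ Q *ᵥ xbar + ∑ i, d i := by
    rw [hG, Matrix.add_mulVec, dotProduct_add, diag_quad d xbar hfeas]
  have h3 : xbar ⬝ᵥ G *ᵥ xbar = xbar ⬝ᵥ c := by rw [hc]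
  linarith [hpsd, hexp ▸ hpsd]
end

section
/- Let σ̄ ∈ S⁺_α and set x̄ = G_α(σ̄)⁻¹ c. If x̄ ∈ {−1,1}ⁿ, then there is no duality gap: P(x̄) = P^d_α(σ̄), i.e., (1/2)⟨x̄, Q x̄⟩ − ⟨x̄, c⟩ = −(1/2)⟨G_α(σ̄)⁻¹ c, c⟩ − (1/2)⟨e, σ̄⟩ − (1/2)⟨e, α⟩. -/
open Matrix

/-- If `σ̄ ∈ S⁺_α` and `x̄ = G_α(σ̄)⁻¹ c ∈ {-1,1}ⁿ`, then there is no
duality gap: `P(x̄) = P^d_α(σ̄)`. -/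
theorem stmt_1 (n : ℕ) (hn : 0 < n)
    (Q : Matrix (Fin n) (Fin n) ℝ) (hQ : Q.IsSymm)
    (c α σbar : Fin n → ℝ)
    (hσ : (Q + Matrix.diagonal (α + σbar)).PosDef)
    (xbar : Fin n → ℝ)
    (hxbar : xbar = (Q + Matrix.diagonal (α + σbar))⁻¹ *ᵥ c)
    (hfeas : ∀ i, xbar i = 1 ∨ xbar i = -1) :
    (1/2) * (xbar ⬝ᵥ Q *ᵥ xbar) - xbar ⬝ᵥ c =
      -(1/2) * (((Q + Matrix.diagonal (α + σbar))⁻¹ *ᵥ c) ⬝ᵥ c)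
        - (1/2) * (∑ i, σbar i) - (1/2) * (∑ i, α i) := by
  set G := Q + Matrix.diagonal (α + σbar) with hG
  have hdet : IsUnit G.det := hσ.det_pos.ne'.isUnit
  have hGx : G *ᵥ xbar = c := by
    rw [hxbar, Matrix.mulVec_mulVec, Matrix.mul_nonsing_inv G hdet, Matrix.one_mulVec]
  have hsq : ∀ i, xbar i * xbar i = 1 := by
    intro i; rcases hfeas i with h | h <;> rw [h] <;> ring
  have hdiag : xbar ⬝ᵥ (Matrix.diagonal (α + σbar) *ᵥ xbar)
      = ∑ i, (α i + σbar i) := by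
    simp only [dotProduct, Matrix.mulVec_diagonal, Pi.add_apply]
    refine Finset.sum_congr rfl fun i _ => ?_
    rw [mul_comm, mul_assoc, hsq i, mul_one]
  have hQx : xbar ⬝ᵥ Q *ᵥ xbar = xbar ⬝ᵥ c - ∑ i, (α i + σbar i) := by
    have : xbar ⬝ᵥ (G *ᵥ xbar) = xbar ⬝ᵥ Q *ᵥ xbar + ∑ i, (α i + σbar i) := by
      rw [hG, Matrix.add_mulVec, dotProduct_add, hdiag]
    rw [hGx] at this
    linarith
  have hxc : ((Q + Matrix.diagonal (α + σbar))⁻¹ *ᵥ c) ⬝ᵥ c = xbar ⬝ᵥ c := by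
    rw [hxbar]
  rw [hQx, hxc, Finset.sum_add_distrib]
  ring
end

section
/- Weak duality holds between the primal problem and the canonical dual problem: for every σ ∈ S⁺_α and every x ∈ {−1,1}ⁿ, P^d_α(σ) ≤ P(x). -/
open Matrix

/-- Weak duality: for every `σ ∈ S⁺_α` and every `x ∈ {-1,1}ⁿ`,
`P^d_α(σ) ≤ P(x)`. -/
theorem stmt_2 (n : ℕ) (hn : 0 < n)
    (Q : Matrix (Fin n) (Fin n) ℝ) (hQ : Q.IsSymm)
    (c α : Fin n → ℝ) :
    ∀ σ : Fin n → ℝ, (Q + Matrix.diagonal (α + σ)).PosDef →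
    ∀ x : Fin n → ℝ, (∀ i, x i = 1 ∨ x i = -1) →
      -(1/2) * (((Q + Matrix.diagonal (α + σ))⁻¹ *ᵥ c) ⬝ᵥ c)
        - (1/2) * (∑ i, σ i) - (1/2) * (∑ i, α i)
      ≤ (1/2) * (x ⬝ᵥ Q *ᵥ x) - x ⬝ᵥ c := by
  intro σ hG x hx
  set G := Q + Matrix.diagonal (α + σ) with hGdef
  have hGsymm : G.IsSymm := by
    rw [Matrix.IsSymm]
    simp [hGdef, Matrix.transpose_add, hQ.eq, Matrix.diagonal_transpose]
  have hdet : IsUnit G.det := isUnit_iff_ne_zero.mpr (ne_of_gt hG.det_pos)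
  set u := G⁻¹ *ᵥ c with hu
  have hGu : G *ᵥ u = c := by
    rw [hu, Matrix.mulVec_mulVec, Matrix.mul_nonsing_inv G hdet, Matrix.one_mulVec]
  have key : 0 ≤ (x - u) ⬝ᵥ G *ᵥ (x - u) := by
    have := hG.posSemidef.dotProduct_mulVec_nonneg (x - u)
    simpa using this
  have h1 : u ⬝ᵥ G *ᵥ x = x ⬝ᵥ c := by
    rw [Matrix.dotProduct_mulVec, ← Matrix.mulVec_transpose, hGsymm.eq, hGu,
      dotProduct_comm]
  have h2 : x ⬝ᵥ G *ᵥ u = x ⬝ᵥ c := by rw [hGu]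
  have h3 : u ⬝ᵥ G *ᵥ u = u ⬝ᵥ c := by rw [hGu]
  have expand : (x - u) ⬝ᵥ G *ᵥ (x - u)
      = x ⬝ᵥ G *ᵥ x - 2 * (x ⬝ᵥ c) + u ⬝ᵥ c := by
    rw [Matrix.mulVec_sub, sub_dotProduct, dotProduct_sub,
      dotProduct_sub, h1, h2, h3]
    ring
  have hdiag : x ⬝ᵥ (Matrix.diagonal (α + σ)) *ᵥ x = (∑ i, α i) + ∑ i, σ i := by
    have hsq : ∀ i, x i * ((α i + σ i) * x i) = α i + σ i := by
      intro i; rcases hx i with h | h <;> rw [h] <;> ring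
    simp [dotProduct, Matrix.mulVec_diagonal, Pi.add_apply, hsq,
      Finset.sum_add_distrib]
  have hxGx : x ⬝ᵥ G *ᵥ x = x ⬝ᵥ Q *ᵥ x + ((∑ i, α i) + ∑ i, σ i) := by
    rw [hGdef, Matrix.add_mulVec, dotProduct_add, hdiag]
  rw [expand, hxGx] at key
  linarith
end

section
/- The β-perturbed canonical dual function P^d_{αβ} is differentiable at every point σ̄ ∈ S⁺_α, and its partial derivative with respect to σᵢ at σ̄ equals (1/2) x̄ᵢ² − σ̄ᵢ/βᵢ − 1/2, where x̄ = G_α(σ̄)⁻¹ c. Equivalently, the gradient of P^d_{αβ} at σ̄ is (1/2)(x̄ ∘ x̄) − σ̄ ⊘ β − (1/2)e, where ∘ denotes the componentwise (Hadamard) product and ⊘ the componentwise quotient. -/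
open Matrix

set_option maxHeartbeats 1000000

attribute [local instance] Matrix.linftyOpNormedRing Matrix.linftyOpNormedAlgebra

/-- The β-perturbed canonical dual function is differentiable at every
`σ̄ ∈ S⁺_α` and its partial derivative in the `i`-th coordinate direction equals
`(1/2) x̄ᵢ² − σ̄ᵢ/βᵢ − 1/2` where `x̄ = G_α(σ̄)⁻¹ c`. -/
theorem stmt_6 (n : ℕ) (hn : 0 < n)
    (Q : Matrix (Fin n) (Fin n) ℝ) (hQ : Q.IsSymm)
    (c α β : Fin n → ℝ) (hβ : ∀ i, 0 < β i)
    (Pd : (Fin n → ℝ) → ℝ)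
    (hPd : Pd = fun σ =>
      -(1/2) * (((Q + Matrix.diagonal (α + σ))⁻¹ *ᵥ c) ⬝ᵥ c)
        - (1/2) * (∑ i, ((σ i)^2 / β i + σ i)) - (1/2) * (∑ i, α i))
    (σbar : Fin n → ℝ)
    (hσ : (Q + Matrix.diagonal (α + σbar)).PosDef)
    (xbar : Fin n → ℝ)
    (hxbar : xbar = (Q + Matrix.diagonal (α + σbar))⁻¹ *ᵥ c) :
    DifferentiableAt ℝ Pd σbar ∧
    ∀ i, fderiv ℝ Pd σbar (Pi.single i 1) =
      (1/2) * (xbar i)^2 - σbar i / β i - 1/2 := by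
  subst hPd hxbar
  set G : Matrix (Fin n) (Fin n) ℝ := Q + Matrix.diagonal (α + σbar) with hGdef
  have hGu : IsUnit G := (Matrix.isUnit_iff_isUnit_det G).mpr
    (isUnit_iff_ne_zero.mpr (ne_of_gt hσ.det_pos))
  have hGsymm : Gᵀ = G := by
    rw [hGdef, Matrix.transpose_add, Matrix.diagonal_transpose, hQ.eq]
  -- the diagonal map as a continuous linear map
  let diagL : (Fin n → ℝ) →ₗ[ℝ] Matrix (Fin n) (Fin n) ℝ :=
    { toFun := Matrix.diagonal
      map_add' := fun v w => by simpa using (Matrix.diagonal_add v w).symm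
      map_smul' := fun r v => Matrix.diagonal_smul r v }
  have hdiagC : ∀ v : Fin n → ℝ, diagL.toContinuousLinearMap v = Matrix.diagonal v :=
    fun _ => rfl
  let diagC : (Fin n → ℝ) →L[ℝ] Matrix (Fin n) (Fin n) ℝ := diagL.toContinuousLinearMap
  -- the evaluation map as a continuous linear map
  let evalL : Matrix (Fin n) (Fin n) ℝ →ₗ[ℝ] ℝ :=
    { toFun := fun A => (A *ᵥ c) ⬝ᵥ c
      map_add' := fun A B => by simp [Matrix.add_mulVec, add_dotProduct]
      map_smul' := fun r A => by simp [Matrix.smul_mulVec, smul_dotProduct] }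
  let evalC : Matrix (Fin n) (Fin n) ℝ →L[ℝ] ℝ := evalL.toContinuousLinearMap
  have hevalC : ∀ A : Matrix (Fin n) (Fin n) ℝ, evalC A = (A *ᵥ c) ⬝ᵥ c := fun _ => rfl
  -- derivative of σ ↦ Q + diagonal (α + σ)
  have hm : HasFDerivAt (fun σ : Fin n → ℝ => Q + Matrix.diagonal (α + σ)) diagC σbar := by
    have heq : (fun σ : Fin n → ℝ => Q + Matrix.diagonal (α + σ))
        = fun σ => (Q + Matrix.diagonal α) + diagC σ := by
      funext σ
      show Q + Matrix.diagonal (α + σ) = Q + Matrix.diagonal α + diagC σ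
      rw [hdiagC, add_assoc, Matrix.diagonal_add]
      rfl
    rw [heq]
    exact (diagC.hasFDerivAt).const_add _
  -- derivative of the inverse at G
  have hinv : HasFDerivAt Ring.inverse
      (-ContinuousLinearMap.mulLeftRight ℝ _ G⁻¹ G⁻¹) G := by
    have h1 := hasFDerivAt_ringInverse (𝕜 := ℝ) hGu.unit
    have h2 : (↑hGu.unit⁻¹ : Matrix (Fin n) (Fin n) ℝ) = G⁻¹ := by
      rw [← Ring.inverse_unit hGu.unit, hGu.unit_spec, Matrix.nonsing_inv_eq_ringInverse]
    rw [h2, hGu.unit_spec] at h1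
    exact h1
  -- derivative of the quadratic-form term
  have hfeq : (fun σ : Fin n → ℝ => ((Q + Matrix.diagonal (α + σ))⁻¹ *ᵥ c) ⬝ᵥ c)
      = evalC ∘ Ring.inverse ∘ (fun σ : Fin n → ℝ => Q + Matrix.diagonal (α + σ)) := by
    funext σ
    simp only [Function.comp_apply]
    rw [← Matrix.nonsing_inv_eq_ringInverse, hevalC]
  have hf : HasFDerivAt (fun σ : Fin n → ℝ => ((Q + Matrix.diagonal (α + σ))⁻¹ *ᵥ c) ⬝ᵥ c)
      ((evalC.comp (-ContinuousLinearMap.mulLeftRight ℝ _ G⁻¹ G⁻¹)).comp diagC) σbar := by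
    rw [hfeq]
    exact (evalC.hasFDerivAt.comp _ (hinv.comp σbar hm))
  -- derivative of the sum term
  have hsum : HasFDerivAt (fun σ : Fin n → ℝ => ∑ i, ((σ i)^2 / β i + σ i))
      (∑ i : Fin n, (((2 * σbar i / β i + 1) : ℝ) •
        (ContinuousLinearMap.proj i : (Fin n → ℝ) →L[ℝ] ℝ))) σbar := by
    apply HasFDerivAt.fun_sum
    intro i _
    have hp : HasFDerivAt (fun σ : Fin n → ℝ => σ i)
        (ContinuousLinearMap.proj i : (Fin n → ℝ) →L[ℝ] ℝ) σbar :=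
      (ContinuousLinearMap.proj (R := ℝ) (φ := fun _ : Fin n => ℝ) i).hasFDerivAt
    have heq : (fun σ : Fin n → ℝ => (σ i)^2 / β i + σ i)
        = fun σ : Fin n → ℝ => (1 / β i) * (σ i * σ i) + σ i := by
      funext σ; ring
    rw [heq]
    have h1 := ((hp.mul hp).const_mul (1 / β i)).add hp
    convert h1 using 1
    ext v
    simp [ContinuousLinearMap.smul_apply]
    ring
    ext v
    simp [ContinuousLinearMap.smul_apply]
    ring
  -- total derivative
  set L : (Fin n → ℝ) →L[ℝ] ℝ :=
    (-(1/2) : ℝ) • ((evalC.comp (-ContinuousLinearMap.mulLeftRight ℝ _ G⁻¹ G⁻¹)).comp diagC)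
      - (1/2 : ℝ) • (∑ i : Fin n, (((2 * σbar i / β i + 1) : ℝ) •
        (ContinuousLinearMap.proj i : (Fin n → ℝ) →L[ℝ] ℝ))) with hL
  have hPd : HasFDerivAt (fun σ : Fin n → ℝ =>
      -(1/2) * (((Q + Matrix.diagonal (α + σ))⁻¹ *ᵥ c) ⬝ᵥ c)
        - (1/2) * (∑ i, ((σ i)^2 / β i + σ i)) - (1/2) * (∑ i, α i)) L σbar := by
    exact (((hf.const_mul (-(1/2))).sub (hsum.const_mul (1/2))).sub_const _)
  refine ⟨hPd.differentiableAt, fun i => ?_⟩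
  rw [hPd.fderiv]
  -- evaluate L at the basis vector
  have hval1 : ((evalC.comp (-ContinuousLinearMap.mulLeftRight ℝ _ G⁻¹ G⁻¹)).comp diagC)
      (Pi.single i 1) = -(((G⁻¹ *ᵥ c) i)^2) := by
    change evalC ((-ContinuousLinearMap.mulLeftRight ℝ _ G⁻¹ G⁻¹) (diagC (Pi.single i 1))) = _
    rw [hdiagC]
    rw [ContinuousLinearMap.neg_apply, ContinuousLinearMap.mulLeftRight_apply]
    rw [hevalC, Matrix.neg_mulVec, neg_dotProduct]
    congr 1
    rw [← Matrix.mulVec_mulVec, ← Matrix.mulVec_mulVec]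
    have hx : Matrix.diagonal (Pi.single i (1:ℝ)) *ᵥ (G⁻¹ *ᵥ c)
        = Pi.single i ((G⁻¹ *ᵥ c) i) := by
      ext j
      rw [Matrix.mulVec_diagonal]
      by_cases h : j = i
      · subst h; simp
      · simp [Pi.single_eq_of_ne h]
    rw [hx]
    have hGinvT : (G⁻¹)ᵀ = G⁻¹ := by rw [Matrix.transpose_nonsing_inv, hGsymm]
    calc (G⁻¹ *ᵥ Pi.single i ((G⁻¹ *ᵥ c) i)) ⬝ᵥ c
        = c ⬝ᵥ (G⁻¹ *ᵥ Pi.single i ((G⁻¹ *ᵥ c) i)) := dotProduct_comm _ _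
      _ = (c ᵥ* G⁻¹) ⬝ᵥ Pi.single i ((G⁻¹ *ᵥ c) i) := Matrix.dotProduct_mulVec _ _ _
      _ = (G⁻¹ *ᵥ c) ⬝ᵥ Pi.single i ((G⁻¹ *ᵥ c) i) := by
          rw [← Matrix.mulVec_transpose, hGinvT]
      _ = ((G⁻¹ *ᵥ c) i)^2 := by
          rw [dotProduct_single]; ring
  have hval2 : (∑ j : Fin n, (((2 * σbar j / β j + 1) : ℝ) •
      (ContinuousLinearMap.proj j : (Fin n → ℝ) →L[ℝ] ℝ))) (Pi.single i 1)
      = 2 * σbar i / β i + 1 := by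
    rw [ContinuousLinearMap.sum_apply]
    rw [Finset.sum_eq_single i]
    · simp
    · intro j _ hj
      simp [Pi.single_eq_of_ne hj]
    · intro h; exact absurd (Finset.mem_univ i) h
  rw [hL]
  rw [ContinuousLinearMap.sub_apply, ContinuousLinearMap.smul_apply,
    ContinuousLinearMap.smul_apply, hval1, hval2]
  have hβi := (hβ i).ne'
  field_simp
  have hbb : β i * (β i)⁻¹ = 1 := mul_inv_cancel₀ hβi
  linear_combination (-(2 * σbar i) - β i) * hbb
end

section
/- If σ̄ ∈ S⁺_α is a critical point of the β-perturbed canonical dual function P^d_{αβ} (i.e., the derivative of P^d_{αβ} at σ̄ vanishes), then the vector x̄ = G_α(σ̄)⁻¹ c satisfies x̄ᵢ² = 1 + 2σ̄ᵢ/βᵢ for every i = 1, …, n. -/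
open Matrix ContinuousLinearMap
attribute [local instance] Matrix.linftyOpNormedRing Matrix.linftyOpNormedAlgebra

theorem keycalc (n : ℕ) (A : Matrix (Fin n) (Fin n) ℝ) (hAs : Aᵀ = A)
    (c : Fin n → ℝ) (i : Fin n) :
    ((A * diagonal (Pi.single i 1) * A) *ᵥ c) ⬝ᵥ c = (A *ᵥ c) i ^ 2 := by
  rw [← mulVec_mulVec, ← mulVec_mulVec, dotProduct_comm, dotProduct_mulVec,
    ← mulVec_transpose, hAs]
  have h : diagonal (Pi.single i 1) *ᵥ (A *ᵥ c) = Pi.single i ((A *ᵥ c) i) := by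
    funext j
    rcases eq_or_ne j i with rfl | hj
    · simp [mulVec_diagonal]
    · simp [mulVec_diagonal, Pi.single_apply, hj]
  rw [h, dotProduct_single, sq]

set_option maxHeartbeats 1000000 in
/-- If `σ̄ ∈ S⁺_α` is a critical point of the β-perturbed canonical
dual function (its derivative vanishes at `σ̄`), then `x̄ = G_α(σ̄)⁻¹ c` satisfies
`x̄ᵢ² = 1 + 2σ̄ᵢ/βᵢ` for all `i`. -/
theorem stmt_7 (n : ℕ) (hn : 0 < n)
    (Q : Matrix (Fin n) (Fin n) ℝ) (hQ : Q.IsSymm)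
    (c α β : Fin n → ℝ) (hβ : ∀ i, 0 < β i)
    (Pd : (Fin n → ℝ) → ℝ)
    (hPd : Pd = fun σ =>
      -(1/2) * (((Q + Matrix.diagonal (α + σ))⁻¹ *ᵥ c) ⬝ᵥ c)
        - (1/2) * (∑ i, ((σ i)^2 / β i + σ i)) - (1/2) * (∑ i, α i))
    (σbar : Fin n → ℝ)
    (hσ : (Q + Matrix.diagonal (α + σbar)).PosDef)
    (hcrit : fderiv ℝ Pd σbar = 0)
    (xbar : Fin n → ℝ)
    (hxbar : xbar = (Q + Matrix.diagonal (α + σbar))⁻¹ *ᵥ c) :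
    ∀ i, (xbar i)^2 = 1 + 2 * σbar i / β i := by
  intro i
  classical
  set A : Matrix (Fin n) (Fin n) ℝ := Q + diagonal (α + σbar) with hAdef
  have hAu : IsUnit A := (Matrix.isUnit_iff_isUnit_det A).2 (isUnit_iff_ne_zero.2 hσ.det_pos.ne')
  have hAs : Aᵀ = A := by
    rw [hAdef, transpose_add, hQ.eq, diagonal_transpose]
  have hAinvs : (A⁻¹)ᵀ = A⁻¹ := by rw [transpose_nonsing_inv, hAs]
  -- derivative of G
  let Ldiag : (Fin n → ℝ) →L[ℝ] Matrix (Fin n) (Fin n) ℝ :=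
    LinearMap.toContinuousLinearMap (Matrix.diagonalLinearMap (Fin n) ℝ ℝ)
  have hG : HasFDerivAt (fun σ : Fin n → ℝ => Q + diagonal (α + σ)) Ldiag σbar := by
    have h0 : (fun σ : Fin n → ℝ => Q + diagonal (α + σ)) =
        fun σ => (Q + diagonal α) + Ldiag σ := by
      funext σ
      show Q + diagonal (α + σ) = Q + diagonal α + Matrix.diagonalLinearMap (Fin n) ℝ ℝ σ
      have : (Matrix.diagonalLinearMap (Fin n) ℝ ℝ) σ = diagonal σ := rfl
      rw [this, add_assoc, diagonal_add]; rfl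
    rw [h0]
    exact Ldiag.hasFDerivAt.const_add _
  -- derivative of inverse
  have hinv : HasFDerivAt Ring.inverse (-(ContinuousLinearMap.mulLeftRight ℝ _ A⁻¹ A⁻¹)) A := by
    have h := hasFDerivAt_ringInverse (𝕜 := ℝ) hAu.unit
    rw [hAu.unit_spec] at h
    rwa [Matrix.coe_units_inv, hAu.unit_spec] at h
  have hGinv : HasFDerivAt (fun σ : Fin n → ℝ => Ring.inverse (Q + diagonal (α + σ)))
      ((-(ContinuousLinearMap.mulLeftRight ℝ _ A⁻¹ A⁻¹)).comp Ldiag) σbar :=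
    HasFDerivAt.comp (g := Ring.inverse) σbar hinv hG
  -- linear map B ↦ (B *ᵥ c) ⬝ᵥ c
  let Lc : Matrix (Fin n) (Fin n) ℝ →L[ℝ] ℝ :=
    LinearMap.toContinuousLinearMap
      { toFun := fun B => (B *ᵥ c) ⬝ᵥ c
        map_add' := fun X Y => by simp [add_mulVec, add_dotProduct]
        map_smul' := fun r X => by simp [smul_mulVec, smul_dotProduct] }
  have hF : HasFDerivAt (fun σ : Fin n → ℝ => (((Q + diagonal (α + σ))⁻¹) *ᵥ c) ⬝ᵥ c)
      (Lc.comp ((-(ContinuousLinearMap.mulLeftRight ℝ _ A⁻¹ A⁻¹)).comp Ldiag)) σbar := by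
    have h0 : (fun σ : Fin n → ℝ => (((Q + diagonal (α + σ))⁻¹) *ᵥ c) ⬝ᵥ c) =
        (fun σ : Fin n → ℝ => Lc (Ring.inverse (Q + diagonal (α + σ)))) := by
      funext σ
      rw [Matrix.nonsing_inv_eq_ringInverse]
      rfl
    rw [h0]
    exact Lc.hasFDerivAt.comp σbar hGinv
  -- derivative of sum
  have hS : HasFDerivAt (fun σ : Fin n → ℝ => ∑ j, ((σ j)^2 / β j + σ j))
      (∑ j, ((2 * σbar j / β j + 1) • (ContinuousLinearMap.proj j : (Fin n → ℝ) →L[ℝ] ℝ))) σbar := by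
    apply HasFDerivAt.fun_sum
    intro j _
    have hd : HasDerivAt (fun t : ℝ => t^2 / β j + t) (2 * σbar j / β j + 1) (σbar j) := by
      have := ((hasDerivAt_pow 2 (σbar j)).div_const (β j)).fun_add (hasDerivAt_id' (σbar j))
      simpa using this
    have h2 := hd.hasFDerivAt.comp σbar (hasFDerivAt_apply (𝕜 := ℝ) (F' := fun _ : Fin n => ℝ) j σbar)
    convert h2 using 1
    · rfl
    ext v
    simp [mul_comm]
  -- total derivative
  set DF := Lc.comp ((-(ContinuousLinearMap.mulLeftRight ℝ _ A⁻¹ A⁻¹)).comp Ldiag) with hDF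
  set DS := ∑ j, ((2 * σbar j / β j + 1) • (ContinuousLinearMap.proj j : (Fin n → ℝ) →L[ℝ] ℝ)) with hDS
  have hPdD : HasFDerivAt Pd ((-(1/2 : ℝ)) • DF - (1/2 : ℝ) • DS) σbar := by
    rw [hPd]
    exact ((hF.const_mul (-(1/2))).sub (hS.const_mul (1/2))).sub_const _
  have hD0 : ((-(1/2 : ℝ)) • DF - (1/2 : ℝ) • DS) = 0 := by
    rw [← hPdD.fderiv]; exact hcrit
  have hzero : ((-(1/2 : ℝ)) • DF - (1/2 : ℝ) • DS) (Pi.single i 1) = 0 := by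
    rw [hD0]; rfl
  -- evaluate DF at Pi.single i 1
  have hDFval : DF (Pi.single i 1) = -((xbar i)^2) := by
    have h1 : DF (Pi.single i 1)
        = ((-(A⁻¹ * diagonal (Pi.single i 1) * A⁻¹)) *ᵥ c) ⬝ᵥ c := by
      simp only [hDF, ContinuousLinearMap.comp_apply, ContinuousLinearMap.neg_apply,
        ContinuousLinearMap.mulLeftRight_apply]
      have h2 : Ldiag (Pi.single i 1) = diagonal (Pi.single i 1) := rfl
      show (-(A⁻¹ * diagonal (Pi.single i 1) * A⁻¹) *ᵥ c) ⬝ᵥ c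
          = (-(A⁻¹ * diagonal (Pi.single i 1) * A⁻¹) *ᵥ c) ⬝ᵥ c
      rfl
    rw [h1, neg_mulVec, neg_dotProduct, keycalc n (A⁻¹) hAinvs c i, hxbar]
  -- evaluate DS at Pi.single i 1
  have hDSval : DS (Pi.single i 1) = 2 * σbar i / β i + 1 := by
    simp only [hDS, ContinuousLinearMap.sum_apply, ContinuousLinearMap.smul_apply,
      ContinuousLinearMap.proj_apply, smul_eq_mul, Pi.single_apply]
    rw [Finset.sum_congr rfl (fun j _ => by rw [mul_ite, mul_one, mul_zero])]
    simp
  rw [ContinuousLinearMap.sub_apply, ContinuousLinearMap.smul_apply,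
    ContinuousLinearMap.smul_apply, hDFval, hDSval, smul_eq_mul, smul_eq_mul] at hzero
  have hb := (hβ i).ne'
  nlinarith [hzero]
end

section
/- Suppose Q + Diag(α) is negative definite, βᵢ > 0 for all i, and σ̄ ∈ S⁺_α is a critical point of the β-perturbed canonical dual function P^d_{αβ}. If in addition βᵢ > (8/3)σ̄ᵢ for every i, then rounding each component of x̄ = G_α(σ̄)⁻¹ c to the nearest integer yields a vector x* ∈ {−1,1}ⁿ, i.e., x* is feasible for the primal max-cut problem. -/
open Matrix

attribute [local instance] Matrix.linftyOpNormedRing Matrix.linftyOpNormedAlgebra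

private lemma round_pm_one {x : ℝ} (h1 : 1 < x^2) (h2 : x^2 < 7/4) :
    ((round x : ℤ) : ℝ) = 1 ∨ ((round x : ℤ) : ℝ) = -1 := by
  rcases le_or_gt 0 x with hpos | hneg'
  · left
    have ha : 1 < x := by nlinarith
    have hb : x < 3/2 := by nlinarith
    have : round x = 1 := by
      rw [round_eq]
      apply Int.floor_eq_iff.mpr
      constructor <;> push_cast <;> linarith
    rw [this]; norm_num
  · right
    have ha : x < -1 := by nlinarith
    have hb : -(3/2) < x := by nlinarith
    have : round x = -1 := by
      rw [round_eq]
      apply Int.floor_eq_iff.mpr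
      constructor <;> push_cast <;> linarith
    rw [this]; norm_num

/-- If `Q + Diag(α)` is negative definite, `βᵢ > 0`, `σ̄ ∈ S⁺_α` is a
critical point of the β-perturbed canonical dual function, and `βᵢ > (8/3)σ̄ᵢ` for
all `i`, then rounding each component of `x̄ = G_α(σ̄)⁻¹ c` gives a vector in
`{-1,1}ⁿ`. -/
theorem stmt_9 (n : ℕ) (hn : 0 < n)
    (Q : Matrix (Fin n) (Fin n) ℝ) (hQ : Q.IsSymm)
    (c α β : Fin n → ℝ) (hβ : ∀ i, 0 < β i)
    (hneg : (-(Q + Matrix.diagonal α)).PosDef)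
    (Pd : (Fin n → ℝ) → ℝ)
    (hPd : Pd = fun σ =>
      -(1/2) * (((Q + Matrix.diagonal (α + σ))⁻¹ *ᵥ c) ⬝ᵥ c)
        - (1/2) * (∑ i, ((σ i)^2 / β i + σ i)) - (1/2) * (∑ i, α i))
    (σbar : Fin n → ℝ)
    (hσ : (Q + Matrix.diagonal (α + σbar)).PosDef)
    (hcrit : fderiv ℝ Pd σbar = 0)
    (hβbig : ∀ i, (8/3) * σbar i < β i)
    (xbar xstar : Fin n → ℝ)
    (hxbar : xbar = (Q + Matrix.diagonal (α + σbar))⁻¹ *ᵥ c)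
    (hxstar : xstar = fun i => ((round (xbar i) : ℤ) : ℝ)) :
    ∀ i, xstar i = 1 ∨ xstar i = -1 := by
  intro i
  set A := Q + Matrix.diagonal (α + σbar) with hA
  -- A is a unit
  have hdet : IsUnit A := (Matrix.isUnit_iff_isUnit_det A).mpr
    (isUnit_iff_ne_zero.mpr hσ.det_pos.ne')
  -- A and A⁻¹ are symmetric
  have hAsymm : Aᵀ = A := by
    rw [hA, Matrix.transpose_add, Matrix.diagonal_transpose, hQ]
  have hBsymm : A⁻¹ᵀ = A⁻¹ := by
    rw [Matrix.transpose_nonsing_inv, hAsymm]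
  -- the diagonal as a continuous linear map
  set D : (Fin n → ℝ) →L[ℝ] Matrix (Fin n) (Fin n) ℝ :=
    LinearMap.toContinuousLinearMap (Matrix.diagonalLinearMap (Fin n) ℝ ℝ) with hD
  -- the quadratic form in M as a continuous linear map
  set φ : Matrix (Fin n) (Fin n) ℝ →L[ℝ] ℝ :=
    LinearMap.toContinuousLinearMap
      { toFun := fun M => (M *ᵥ c) ⬝ᵥ c
        map_add' := by intro M N; simp [Matrix.add_mulVec, add_dotProduct]
        map_smul' := by intro r M; simp [Matrix.smul_mulVec, smul_dotProduct] }
    with hφdef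
  have hφapp : ∀ M, φ M = (M *ᵥ c) ⬝ᵥ c := fun M => rfl
  have hDapp : ∀ v, D v = Matrix.diagonal v := fun v => rfl
  -- derivative of σ ↦ G(σ)
  have hG : HasFDerivAt (fun σ : Fin n → ℝ => Q + Matrix.diagonal (α + σ)) D σbar := by
    have he : (fun σ : Fin n → ℝ => Q + Matrix.diagonal (α + σ))
        = fun σ => (Q + Matrix.diagonal α) + D σ := by
      funext σ
      simp [hDapp, Matrix.diagonal_add, add_assoc]
    rw [he]
    exact (D.hasFDerivAt).const_add _
  -- derivative of σ ↦ G(σ)⁻¹ (as Ring.inverse)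
  have hu : (hdet.unit : Matrix (Fin n) (Fin n) ℝ) = A := hdet.unit_spec
  have huinv : ((hdet.unit⁻¹ : (Matrix (Fin n) (Fin n) ℝ)ˣ) : Matrix (Fin n) (Fin n) ℝ)
      = A⁻¹ := by
    rw [Matrix.coe_units_inv, hu]
  have hinvA : HasFDerivAt (Ring.inverse : Matrix (Fin n) (Fin n) ℝ → _)
      (-(ContinuousLinearMap.mulLeftRight ℝ _ A⁻¹ A⁻¹)) A := by
    have := hasFDerivAt_ringInverse (𝕜 := ℝ) hdet.unit
    rwa [hu, huinv] at this
  have hinv : HasFDerivAt (fun σ : Fin n → ℝ => Ring.inverse (Q + Matrix.diagonal (α + σ)))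
      ((-(ContinuousLinearMap.mulLeftRight ℝ _ A⁻¹ A⁻¹)).comp D) σbar := by
    exact hinvA.comp σbar hG
  -- derivative of the matrix part
  have hmat : HasFDerivAt
      (fun σ : Fin n → ℝ => φ (Ring.inverse (Q + Matrix.diagonal (α + σ))))
      (φ.comp ((-(ContinuousLinearMap.mulLeftRight ℝ _ A⁻¹ A⁻¹)).comp D)) σbar :=
    φ.hasFDerivAt.comp σbar hinv
  -- derivative of the quadratic part
  set Lq : (Fin n → ℝ) →L[ℝ] ℝ :=
    ∑ j, ((β j)⁻¹ • (σbar j • (ContinuousLinearMap.proj j : (Fin n → ℝ) →L[ℝ] ℝ)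
          + σbar j • (ContinuousLinearMap.proj j : (Fin n → ℝ) →L[ℝ] ℝ))
        + (ContinuousLinearMap.proj j : (Fin n → ℝ) →L[ℝ] ℝ))
    with hLq
  have hq : HasFDerivAt (fun σ : Fin n → ℝ => ∑ j, ((σ j)^2 / β j + σ j)) Lq σbar := by
    have he : (fun σ : Fin n → ℝ => ∑ j, ((σ j)^2 / β j + σ j))
        = fun σ => ∑ j, ((β j)⁻¹ * (σ j * σ j) + σ j) := by
      funext σ
      refine Finset.sum_congr rfl fun j _ => ?_
      rw [div_eq_inv_mul, sq]
    rw [he, hLq]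
    apply HasFDerivAt.fun_sum
    intro j _
    exact (((hasFDerivAt_apply j σbar).mul (hasFDerivAt_apply j σbar)).const_mul
      ((β j)⁻¹)).add (hasFDerivAt_apply j σbar)
  -- total derivative of Pd
  have hPd' : Pd = fun σ : Fin n → ℝ =>
      -(1/2) * φ (Ring.inverse (Q + Matrix.diagonal (α + σ)))
        - (1/2) * (∑ j, ((σ j)^2 / β j + σ j)) - (1/2) * (∑ j, α j) := by
    rw [hPd]
    funext σ
    rw [hφapp, Matrix.nonsing_inv_eq_ringInverse]
  have htot : HasFDerivAt Pd
      ((-(1/2) : ℝ) • (φ.comp ((-(ContinuousLinearMap.mulLeftRight ℝ _ A⁻¹ A⁻¹)).comp D))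
        - (1/2 : ℝ) • Lq) σbar := by
    rw [hPd']
    exact ((hmat.const_mul (-(1/2) : ℝ)).sub (hq.const_mul (1/2 : ℝ))).sub_const _
  have hzero := htot.fderiv.symm.trans hcrit
  -- evaluate at the i-th basis vector
  have heval := congrFun (congrArg (DFunLike.coe) hzero) (Pi.single i 1)
  simp only [hLq, ContinuousLinearMap.sub_apply, ContinuousLinearMap.smul_apply,
    ContinuousLinearMap.coe_comp', Function.comp_apply, ContinuousLinearMap.neg_apply,
    ContinuousLinearMap.mulLeftRight_apply, ContinuousLinearMap.coe_sum',
    Finset.sum_apply, ContinuousLinearMap.add_apply,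
    ContinuousLinearMap.proj_apply, ContinuousLinearMap.zero_apply, smul_eq_mul,
    pow_one] at heval
  have hc : (φ.comp ((-(ContinuousLinearMap.mulLeftRight ℝ _ A⁻¹ A⁻¹)).comp D)) (Pi.single i 1)
      = ((-(A⁻¹ * Matrix.diagonal (Pi.single i 1) * A⁻¹)) *ᵥ c) ⬝ᵥ c := rfl
  rw [hc] at heval; clear hc
  -- compute the matrix term
  have hterm : (-(A⁻¹ * Matrix.diagonal (Pi.single i 1) * A⁻¹) *ᵥ c) ⬝ᵥ c
      = -(xbar i)^2 := by
    rw [Matrix.neg_mulVec, neg_dotProduct]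
    congr 1
    have e1 : (A⁻¹ * Matrix.diagonal (Pi.single i 1) * A⁻¹) *ᵥ c
        = A⁻¹ *ᵥ (Matrix.diagonal (Pi.single i 1) *ᵥ xbar) := by
      rw [hxbar, ← Matrix.mulVec_mulVec, ← Matrix.mulVec_mulVec]
    rw [e1, dotProduct_comm, Matrix.dotProduct_mulVec, ← Matrix.mulVec_transpose,
      hBsymm, ← hxbar]
    simp only [dotProduct, Matrix.mulVec_diagonal, Pi.single_apply]
    rw [Finset.sum_eq_single i]
    · simp [pow_two]
    · intro b _ hb; simp [hb]
    · intro h; exact absurd (Finset.mem_univ i) h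
  rw [hterm] at heval
  -- sum term
  have hsum : (∑ j, ((β j)⁻¹ * (σbar j * (Pi.single i 1 : Fin n → ℝ) j
        + σbar j * (Pi.single i 1 : Fin n → ℝ) j) + (Pi.single i 1 : Fin n → ℝ) j))
      = 2 * σbar i / β i + 1 := by
    rw [Finset.sum_eq_single i]
    · simp only [Pi.single_eq_same]
      rw [div_eq_inv_mul]; ring
    · intro b _ hb; simp [Pi.single_apply, hb]
    · intro h; exact absurd (Finset.mem_univ i) h
  -- key identity
  have key : (xbar i)^2 = 2 * σbar i / β i + 1 := by
    rw [hsum] at heval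
    linarith [heval]
  clear hcrit hPd hPd' hφapp hDapp hG hu huinv hinvA hinv hmat hq htot hzero heval
    hterm hsum hdet hAsymm hBsymm hLq hφdef hD
  clear_value Lq φ D
  clear Lq φ D
  -- positivity of σbar i
  have hApos : 0 < A i i := by
    have := hσ.dotProduct_mulVec_pos (x := Pi.single i 1) (by simp [Function.ne_iff])
    simpa [Matrix.mulVec_single, single_dotProduct] using this
  have hAneg : 0 < -(Q i i + α i) := by
    have := hneg.dotProduct_mulVec_pos (x := Pi.single i 1) (by simp [Function.ne_iff])
    simpa [Matrix.mulVec_single, single_dotProduct, Matrix.add_apply,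
      Matrix.diagonal_apply_eq, Matrix.neg_apply] using this
  have hAii : A i i = Q i i + (α i + σbar i) := by
    simp [hA, Matrix.add_apply, Matrix.diagonal_apply_eq]
  have hσpos : 0 < σbar i := by rw [hAii] at hApos; linarith
  -- bounds on xbar i ^ 2
  have hβi := hβ i
  have hβbigi := hβbig i
  have hub : 2 * σbar i / β i < 3/4 := by
    rw [div_lt_iff₀ hβi]; linarith
  have hlb : 0 < 2 * σbar i / β i := by positivity
  have hsq1 : 1 < (xbar i)^2 := by rw [key]; linarith
  have hsq2 : (xbar i)^2 < 7/4 := by rw [key]; linarith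
  rw [hxstar]
  exact round_pm_one hsq1 hsq2
end

section
/- The function σ ↦ ⟨G_α(σ)⁻¹ c, c⟩ is convex on the dual feasible set S⁺_α; equivalently, the function σ ↦ −(1/2)⟨G_α(σ)⁻¹ c, c⟩ is concave on S⁺_α: for all σ₁, σ₂ ∈ S⁺_α and all t ∈ [0,1], ⟨G_α(tσ₁ + (1−t)σ₂)⁻¹ c, c⟩ ≤ t⟨G_α(σ₁)⁻¹ c, c⟩ + (1−t)⟨G_α(σ₂)⁻¹ c, c⟩. -/
open Matrix

lemma quad_le_inv_form {n : ℕ} {A : Matrix (Fin n) (Fin n) ℝ} (hA : A.PosDef)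
    (c x : Fin n → ℝ) :
    2 * (c ⬝ᵥ x) - x ⬝ᵥ (A *ᵥ x) ≤ (A⁻¹ *ᵥ c) ⬝ᵥ c := by
  set b : Fin n → ℝ := A⁻¹ *ᵥ c with hb
  have hAb : A *ᵥ b = c := by
    rw [hb, mulVec_mulVec, mul_nonsing_inv _ (isUnit_iff_isUnit_det _ |>.1 hA.isUnit),
      one_mulVec]
  have hsym : Aᵀ = A := by
    have := hA.isHermitian.eq
    simpa [Matrix.conjTranspose_eq_transpose_of_trivial] using this
  have hbAx : ∀ y : Fin n → ℝ, b ⬝ᵥ (A *ᵥ y) = c ⬝ᵥ y := by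
    intro y
    rw [dotProduct_mulVec, ← mulVec_transpose, hsym, hAb]
  have key : (0:ℝ) ≤ (x - b) ⬝ᵥ (A *ᵥ (x - b)) := by
    have := hA.posSemidef.dotProduct_mulVec_nonneg (x - b)
    simpa using this
  have expand : (x - b) ⬝ᵥ (A *ᵥ (x - b))
      = x ⬝ᵥ (A *ᵥ x) - c ⬝ᵥ x - c ⬝ᵥ x + b ⬝ᵥ c := by
    have h1 : x ⬝ᵥ (A *ᵥ b) = c ⬝ᵥ x := by rw [hAb, dotProduct_comm]
    have h2 : b ⬝ᵥ (A *ᵥ x) = c ⬝ᵥ x := hbAx x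
    have h3 : b ⬝ᵥ (A *ᵥ b) = b ⬝ᵥ c := by rw [hAb]
    rw [mulVec_sub, dotProduct_sub, sub_dotProduct, sub_dotProduct, h1, h2, h3]
    ring
  have hbc : b ⬝ᵥ c = (A⁻¹ *ᵥ c) ⬝ᵥ c := rfl
  nlinarith [key, expand]

lemma combo_posdef {n : ℕ} {A B : Matrix (Fin n) (Fin n) ℝ} (hA : A.PosDef)
    (hB : B.PosDef) {t : ℝ} (ht0 : 0 ≤ t) (ht1 : t ≤ 1) :
    (t • A + (1 - t) • B).PosDef := by
  rw [posDef_iff_dotProduct_mulVec]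
  constructor
  · have hA' := hA.isHermitian
    have hB' := hB.isHermitian
    unfold Matrix.IsHermitian at *
    ext i j
    simp only [conjTranspose_apply, Matrix.add_apply, Matrix.smul_apply, star_trivial, smul_eq_mul]
    have h1 : A j i = A i j := by
      have := congrFun (congrFun hA' i) j; simpa [conjTranspose_apply] using this
    have h2 : B j i = B i j := by
      have := congrFun (congrFun hB' i) j; simpa [conjTranspose_apply] using this
    rw [h1, h2]
  · intro x hx
    have hqA := hA.dotProduct_mulVec_pos hx
    have hqB := hB.dotProduct_mulVec_pos hx
    simp only [star_trivial] at hqA hqB ⊢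
    rw [add_mulVec, smul_mulVec, smul_mulVec, dotProduct_add,
      dotProduct_smul, dotProduct_smul, smul_eq_mul, smul_eq_mul]
    rcases eq_or_lt_of_le ht0 with h | h
    · rw [← h]
      simp only [zero_mul, zero_add, sub_zero, one_mul]
      exact hqB
    · exact add_pos_of_pos_of_nonneg (mul_pos h hqA)
        (mul_nonneg (by linarith) hqB.le)

/-- The function `σ ↦ ⟨G_α(σ)⁻¹ c, c⟩` is convex on the dual
feasible set `S⁺_α`. -/
theorem stmt_11 (n : ℕ) (hn : 0 < n)
    (Q : Matrix (Fin n) (Fin n) ℝ) (hQ : Q.IsSymm)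
    (c α : Fin n → ℝ) :
    ∀ σ₁ σ₂ : Fin n → ℝ,
      (Q + Matrix.diagonal (α + σ₁)).PosDef →
      (Q + Matrix.diagonal (α + σ₂)).PosDef →
      ∀ t : ℝ, t ∈ Set.Icc (0:ℝ) 1 →
        ((Q + Matrix.diagonal (α + (t • σ₁ + (1 - t) • σ₂)))⁻¹ *ᵥ c) ⬝ᵥ c
          ≤ t * (((Q + Matrix.diagonal (α + σ₁))⁻¹ *ᵥ c) ⬝ᵥ c)
            + (1 - t) * (((Q + Matrix.diagonal (α + σ₂))⁻¹ *ᵥ c) ⬝ᵥ c) := by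
  intro σ₁ σ₂ h1 h2 t ht
  obtain ⟨ht0, ht1⟩ := ht
  set A₁ := Q + Matrix.diagonal (α + σ₁) with hA₁
  set A₂ := Q + Matrix.diagonal (α + σ₂) with hA₂
  have hM : Q + Matrix.diagonal (α + (t • σ₁ + (1 - t) • σ₂)) = t • A₁ + (1 - t) • A₂ := by
    rw [hA₁, hA₂, smul_add, smul_add]
    have hQsum : t • Q + (1 - t) • Q = Q := by
      rw [← add_smul]; simp
    have hdsum : t • (α + σ₁) + (1 - t) • (α + σ₂) = α + (t • σ₁ + (1 - t) • σ₂) := by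
      funext i
      simp only [Pi.add_apply, Pi.smul_apply, smul_eq_mul]
      ring
    have key : t • Q + t • Matrix.diagonal (α + σ₁) + ((1 - t) • Q +
        (1 - t) • Matrix.diagonal (α + σ₂))
      = (t • Q + (1 - t) • Q) + (t • Matrix.diagonal (α + σ₁) +
        (1 - t) • Matrix.diagonal (α + σ₂)) := by abel
    rw [key, hQsum, ← diagonal_smul, ← diagonal_smul, diagonal_add, ← hdsum]
    rfl
  rw [hM]
  set M := t • A₁ + (1 - t) • A₂ with hMdef
  have hMpd : M.PosDef := combo_posdef h1 h2 ht0 ht1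
  set x : Fin n → ℝ := M⁻¹ *ᵥ c with hx
  have hMx : M *ᵥ x = c := by
    rw [hx, mulVec_mulVec, mul_nonsing_inv _ (isUnit_iff_isUnit_det _ |>.1 hMpd.isUnit),
      one_mulVec]
  have hLHS : (M⁻¹ *ᵥ c) ⬝ᵥ c = 2 * (c ⬝ᵥ x) - x ⬝ᵥ (M *ᵥ x) := by
    rw [hMx, ← hx, dotProduct_comm c x]; ring
  have hsplit : x ⬝ᵥ (M *ᵥ x) = t * (x ⬝ᵥ (A₁ *ᵥ x)) + (1 - t) * (x ⬝ᵥ (A₂ *ᵥ x)) := by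
    rw [hMdef, add_mulVec, smul_mulVec, smul_mulVec, dotProduct_add,
      dotProduct_smul, dotProduct_smul, smul_eq_mul, smul_eq_mul]
  have hq1 : 2 * (c ⬝ᵥ x) - x ⬝ᵥ (A₁ *ᵥ x) ≤ (A₁⁻¹ *ᵥ c) ⬝ᵥ c := quad_le_inv_form h1 c x
  have hq2 : 2 * (c ⬝ᵥ x) - x ⬝ᵥ (A₂ *ᵥ x) ≤ (A₂⁻¹ *ᵥ c) ⬝ᵥ c := quad_le_inv_form h2 c x
  have e1 : t * (2 * (c ⬝ᵥ x) - x ⬝ᵥ (A₁ *ᵥ x)) ≤ t * ((A₁⁻¹ *ᵥ c) ⬝ᵥ c) :=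
    mul_le_mul_of_nonneg_left hq1 ht0
  have e2 : (1 - t) * (2 * (c ⬝ᵥ x) - x ⬝ᵥ (A₂ *ᵥ x)) ≤ (1 - t) * ((A₂⁻¹ *ᵥ c) ⬝ᵥ c) :=
    mul_le_mul_of_nonneg_left hq2 (by linarith)
  have : (M⁻¹ *ᵥ c) ⬝ᵥ c = t * (2 * (c ⬝ᵥ x) - x ⬝ᵥ (A₁ *ᵥ x))
      + (1 - t) * (2 * (c ⬝ᵥ x) - x ⬝ᵥ (A₂ *ᵥ x)) := by
    rw [hLHS, hsplit]; ring
  linarith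
end

section
/- If βᵢ > 0 for all i, then the β-perturbed canonical dual function P^d_{αβ} is strictly concave on the dual feasible set S⁺_α: for all σ₁, σ₂ ∈ S⁺_α with σ₁ ≠ σ₂ and all t ∈ (0,1), P^d_{αβ}(tσ₁ + (1−t)σ₂) > t·P^d_{αβ}(σ₁) + (1−t)·P^d_{αβ}(σ₂). -/
open Matrix

lemma aux_mix_posdef {n : ℕ} {A B : Matrix (Fin n) (Fin n) ℝ}
    (hA : A.PosDef) (hB : B.PosDef) {t : ℝ} (ht0 : 0 < t) (ht1 : t < 1) :
    (t • A + (1 - t) • B).PosDef := by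
  refine posDef_iff_dotProduct_mulVec.mpr ⟨?_, ?_⟩
  · rw [Matrix.IsHermitian]
    simp only [conjTranspose_add, conjTranspose_smul, star_trivial, hA.1.eq, hB.1.eq]
  · intro x hx
    have h1 := hA.dotProduct_mulVec_pos hx
    have h2 := hB.dotProduct_mulVec_pos hx
    simp only [add_mulVec, smul_mulVec, dotProduct_add, dotProduct_smul,
      smul_eq_mul, star_trivial] at *
    nlinarith

lemma aux_quad_lb {n : ℕ} {M : Matrix (Fin n) (Fin n) ℝ}
    (hM : M.PosDef) (hs : M.IsSymm) (c x : Fin n → ℝ) :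
    2 * (c ⬝ᵥ x) - x ⬝ᵥ (M *ᵥ x) ≤ (M⁻¹ *ᵥ c) ⬝ᵥ c := by
  set u := M⁻¹ *ᵥ c with hu
  have hMu : M *ᵥ u = c := by
    rw [hu, mulVec_mulVec, mul_nonsing_inv _ (isUnit_iff_ne_zero.mpr hM.det_pos.ne'), one_mulVec]
  have h0 : 0 ≤ (x - u) ⬝ᵥ (M *ᵥ (x - u)) := by
    simpa using hM.posSemidef.dotProduct_mulVec_nonneg (x - u)
  have hsymm : ∀ y z : Fin n → ℝ, y ⬝ᵥ (M *ᵥ z) = z ⬝ᵥ (M *ᵥ y) := by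
    intro y z
    rw [dotProduct_mulVec, ← mulVec_transpose, hs.eq, dotProduct_comm]
  have hx : x ⬝ᵥ (M *ᵥ u) = c ⬝ᵥ x := by rw [hMu, dotProduct_comm]
  have hux : u ⬝ᵥ (M *ᵥ x) = c ⬝ᵥ x := by rw [hsymm, hx]
  have huu : u ⬝ᵥ (M *ᵥ u) = u ⬝ᵥ c := by rw [hMu]
  have hgoal : u ⬝ᵥ c = u ⬝ᵥ c := rfl
  have hexp : (x - u) ⬝ᵥ (M *ᵥ (x - u))
      = x ⬝ᵥ (M *ᵥ x) - 2 * (c ⬝ᵥ x) + u ⬝ᵥ c := by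
    rw [mulVec_sub, dotProduct_sub, sub_dotProduct, sub_dotProduct, hx, hux, huu]
    ring
  have hval : (M⁻¹ *ᵥ c) ⬝ᵥ c = u ⬝ᵥ c := rfl
  rw [hval]
  rw [hexp] at h0
  linarith

lemma aux_quad_eq {n : ℕ} {M : Matrix (Fin n) (Fin n) ℝ}
    (hM : M.PosDef) (c : Fin n → ℝ) :
    2 * (c ⬝ᵥ (M⁻¹ *ᵥ c)) - (M⁻¹ *ᵥ c) ⬝ᵥ (M *ᵥ (M⁻¹ *ᵥ c)) = (M⁻¹ *ᵥ c) ⬝ᵥ c := by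
  have hMu : M *ᵥ (M⁻¹ *ᵥ c) = c := by
    rw [mulVec_mulVec, mul_nonsing_inv _ (isUnit_iff_ne_zero.mpr hM.det_pos.ne'), one_mulVec]
  rw [hMu, dotProduct_comm]
  ring

lemma aux_combine (qA qB qM S1 S2 Sm K t : ℝ)
    (h1 : qM ≤ t * qA + (1 - t) * qB) (h2 : Sm < t * S1 + (1 - t) * S2) :
    t * (-(1/2) * qA - (1/2) * S1 - K) + (1 - t) * (-(1/2) * qB - (1/2) * S2 - K)
      < -(1/2) * qM - (1/2) * Sm - K := by
  nlinarith

/-- If `βᵢ > 0` for all `i`, then the β-perturbed canonical dual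
function `P^d_{αβ}` is strictly concave on the dual feasible set `S⁺_α`. -/
theorem stmt_12 (n : ℕ) (hn : 0 < n)
    (Q : Matrix (Fin n) (Fin n) ℝ) (hQ : Q.IsSymm)
    (c α β : Fin n → ℝ) (hβ : ∀ i, 0 < β i)
    (Pd : (Fin n → ℝ) → ℝ)
    (hPd : Pd = fun σ =>
      -(1/2) * (((Q + Matrix.diagonal (α + σ))⁻¹ *ᵥ c) ⬝ᵥ c)
        - (1/2) * (∑ i, ((σ i)^2 / β i + σ i)) - (1/2) * (∑ i, α i)) :
    ∀ σ₁ σ₂ : Fin n → ℝ,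
      (Q + Matrix.diagonal (α + σ₁)).PosDef →
      (Q + Matrix.diagonal (α + σ₂)).PosDef →
      σ₁ ≠ σ₂ →
      ∀ t : ℝ, t ∈ Set.Ioo (0:ℝ) 1 →
        t * Pd σ₁ + (1 - t) * Pd σ₂ < Pd (t • σ₁ + (1 - t) • σ₂) := by
  intro σ₁ σ₂ h₁ h₂ hne t ht
  obtain ⟨ht0, ht1⟩ := ht
  subst hPd
  dsimp only
  set A := Q + Matrix.diagonal (α + σ₁) with hA
  set B := Q + Matrix.diagonal (α + σ₂) with hB
  set σm := t • σ₁ + (1 - t) • σ₂ with hσm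
  have hMeq : Q + Matrix.diagonal (α + σm) = t • A + (1 - t) • B := by
    rw [hA, hB, hσm]
    ext i j
    by_cases h : i = j <;>
      simp [Matrix.add_apply, Matrix.diagonal_apply, h, Matrix.smul_apply] <;> ring
  have hM : (Q + Matrix.diagonal (α + σm)).PosDef := by
    rw [hMeq]; exact aux_mix_posdef h₁ h₂ ht0 ht1
  have hAsymm : A.IsSymm := by
    rw [hA, Matrix.IsSymm, Matrix.transpose_add, hQ.eq, Matrix.diagonal_transpose]
  have hBsymm : B.IsSymm := by
    rw [hB, Matrix.IsSymm, Matrix.transpose_add, hQ.eq, Matrix.diagonal_transpose]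
  set M := Q + Matrix.diagonal (α + σm) with hMdef
  set u := M⁻¹ *ᵥ c with hudef
  have hAq : 2 * (c ⬝ᵥ u) - u ⬝ᵥ (A *ᵥ u) ≤ (A⁻¹ *ᵥ c) ⬝ᵥ c := aux_quad_lb h₁ hAsymm c u
  have hBq : 2 * (c ⬝ᵥ u) - u ⬝ᵥ (B *ᵥ u) ≤ (B⁻¹ *ᵥ c) ⬝ᵥ c := aux_quad_lb h₂ hBsymm c u
  have hMq : (M⁻¹ *ᵥ c) ⬝ᵥ c = 2 * (c ⬝ᵥ u) - u ⬝ᵥ (M *ᵥ u) := (aux_quad_eq hM c).symm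
  have hsplit : u ⬝ᵥ (M *ᵥ u) = t * (u ⬝ᵥ (A *ᵥ u)) + (1 - t) * (u ⬝ᵥ (B *ᵥ u)) := by
    rw [hMeq, add_mulVec, smul_mulVec, smul_mulVec, dotProduct_add,
      dotProduct_smul, dotProduct_smul, smul_eq_mul, smul_eq_mul]
  have hmat : (M⁻¹ *ᵥ c) ⬝ᵥ c ≤
      t * ((A⁻¹ *ᵥ c) ⬝ᵥ c) + (1 - t) * ((B⁻¹ *ᵥ c) ⬝ᵥ c) := by
    have e1 : t * (2 * (c ⬝ᵥ u) - u ⬝ᵥ (A *ᵥ u)) ≤ t * ((A⁻¹ *ᵥ c) ⬝ᵥ c) :=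
      mul_le_mul_of_nonneg_left hAq ht0.le
    have e2 : (1 - t) * (2 * (c ⬝ᵥ u) - u ⬝ᵥ (B *ᵥ u)) ≤ (1 - t) * ((B⁻¹ *ᵥ c) ⬝ᵥ c) :=
      mul_le_mul_of_nonneg_left hBq (by linarith)
    rw [hMq, hsplit]
    nlinarith [e1, e2]
  -- strict inequality for the quadratic sum part
  have hS : (∑ i, ((σm i)^2 / β i + σm i)) <
      t * (∑ i, ((σ₁ i)^2 / β i + σ₁ i)) + (1 - t) * (∑ i, ((σ₂ i)^2 / β i + σ₂ i)) := by
    rw [Finset.mul_sum, Finset.mul_sum, ← Finset.sum_add_distrib]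
    obtain ⟨j, hj⟩ := Function.ne_iff.mp hne
    refine Finset.sum_lt_sum (fun i _ => ?_) ⟨j, Finset.mem_univ j, ?_⟩
    · have hb : 0 < (β i)⁻¹ := inv_pos.2 (hβ i)
      have hm : σm i = t * σ₁ i + (1 - t) * σ₂ i := by
        simp [hσm, Pi.add_apply, Pi.smul_apply, smul_eq_mul]
      rw [hm, div_eq_mul_inv, div_eq_mul_inv, div_eq_mul_inv]
      nlinarith [mul_nonneg (mul_nonneg ht0.le (by linarith : (0:ℝ) ≤ 1 - t))
        (mul_nonneg (sq_nonneg (σ₁ i - σ₂ i)) hb.le)]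
    · have hb : 0 < (β j)⁻¹ := inv_pos.2 (hβ j)
      have hm : σm j = t * σ₁ j + (1 - t) * σ₂ j := by
        simp [hσm, Pi.add_apply, Pi.smul_apply, smul_eq_mul]
      have hd : 0 < (σ₁ j - σ₂ j)^2 := by
        have : σ₁ j - σ₂ j ≠ 0 := sub_ne_zero.2 hj
        positivity
      rw [hm, div_eq_mul_inv, div_eq_mul_inv, div_eq_mul_inv]
      nlinarith [mul_pos (mul_pos ht0 (by linarith : (0:ℝ) < 1 - t)) (mul_pos hd hb)]
  exact aux_combine _ _ _ _ _ _ _ _ hmat hS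
end
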